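/- For every irrational real number r, the sequence of points ((2rn mod ℤ), (rn² mod ℤ)), n ∈ ℕ, is dense in the 2-torus 𝕋² = (ℝ/ℤ) × (ℝ/ℤ). Equivalently, the set {({2rn}, {rn²}) : n ∈ ℕ} is dense in [0,1]², where {x} denotes the fractional part of x. -/

import Mathlib

open Set

namespace Stmt2Aux

local notation "𝕋" => UnitAddCircle

lemma coe_int_eq_zero (n : ℤ) : ((n : ℝ) : 𝕋) = 0 :=
  (AddCircle.coe_eq_zero_iff (1:ℝ)).2 ⟨n, by simp⟩

lemma coe_eq_coe {x y : ℝ} (n : ℤ) (h : x - y = n) : (x : 𝕋) = (y : 𝕋) := by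
  have h1 : (x : 𝕋) - (y : 𝕋) = ((x - y : ℝ) : 𝕋) := rfl
  have h2 : ((x - y : ℝ) : 𝕋) = 0 := by rw [h]; exact coe_int_eq_zero n
  have h3 := h1.trans h2
  have := sub_eq_zero.1 h3
  exact this

lemma norm_coe_le (x : ℝ) : ‖(x : 𝕋)‖ ≤ |x| := by
  simpa using (QuotientAddGroup.norm_mk_le_norm : ‖((x:ℝ) : ℝ ⧸ AddSubgroup.zmultiples (1:ℝ))‖ ≤ ‖x‖)

lemma dist_coe_le (x y : ℝ) : dist (x : 𝕋) (y : 𝕋) ≤ |x - y| := by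
  rw [dist_eq_norm]
  exact norm_coe_le (x - y)

lemma coe_nat_mul (m : ℕ) (x : ℝ) : ((m * x : ℝ) : 𝕋) = m • (x : 𝕋) := by
  rw [← AddCircle.coe_nsmul, nsmul_eq_mul]

/-- Pigeonhole: small nonzero irrational element with the same image as an orbit point. -/
lemma exists_small (θ : ℝ) (hθ : Irrational θ) {ε : ℝ} (hε : 0 < ε) :
    ∃ δ : ℝ, Irrational δ ∧ |δ| < ε ∧ ∃ n : ℕ, 0 < n ∧ ((n * θ : ℝ) : 𝕋) = (δ : 𝕋) := by
  obtain ⟨N, hN⟩ := exists_nat_gt (1 / ε)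
  have hNR : (0:ℝ) < N := lt_of_le_of_lt (by positivity) hN
  have hinvN : 1 / (N:ℝ) < ε := by
    rw [div_lt_iff₀ hNR]
    have h1 : 1 < N * ε := by
      have := (div_lt_iff₀ hε).1 hN
      linarith
    linarith [h1]
  have hmaps : ∀ k ∈ Finset.range (N+1), (⌊(N:ℝ) * Int.fract (k * θ)⌋₊) ∈ Finset.range N := by
    intro k _
    rw [Finset.mem_range, ← Nat.cast_lt (α := ℝ)]
    calc (⌊(N:ℝ) * Int.fract (k * θ)⌋₊ : ℝ)
        ≤ (N:ℝ) * Int.fract (k * θ) :=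
          Nat.floor_le (mul_nonneg hNR.le (Int.fract_nonneg _))
      _ < N := by nlinarith [Int.fract_lt_one ((k:ℝ) * θ)]
  obtain ⟨k₁, hk₁, k₂, hk₂, hne, heq⟩ :=
    Finset.exists_ne_map_eq_of_card_lt_of_maps_to (by simp) hmaps
  wlog hlt : k₂ < k₁ generalizing k₁ k₂
  · exact this k₂ hk₂ k₁ hk₁ hne.symm heq.symm (by omega)
  set f₁ := Int.fract ((k₁:ℝ) * θ) with hf₁
  set f₂ := Int.fract ((k₂:ℝ) * θ) with hf₂
  have hf : f₁ - f₂ = ((k₁ - k₂ : ℕ) : ℝ) * θ - ((⌊(k₁:ℝ)*θ⌋ - ⌊(k₂:ℝ)*θ⌋ : ℤ) : ℝ) := by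
    rw [hf₁, hf₂, Int.fract, Int.fract]
    push_cast [Nat.cast_sub hlt.le]
    ring
  have hdiff : |f₁ - f₂| < 1 / N := by
    have heq' : ⌊(N:ℝ) * f₁⌋₊ = ⌊(N:ℝ) * f₂⌋₊ := heq
    have h1 : ((⌊(N:ℝ) * f₁⌋₊ : ℕ) : ℝ) ≤ N * f₁ :=
      Nat.floor_le (mul_nonneg hNR.le (Int.fract_nonneg _))
    have h2 : (N:ℝ) * f₁ < (⌊(N:ℝ) * f₁⌋₊ : ℕ) + 1 := Nat.lt_floor_add_one _
    have h3 : ((⌊(N:ℝ) * f₁⌋₊ : ℕ) : ℝ) ≤ N * f₂ := by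
      rw [heq']; exact Nat.floor_le (mul_nonneg hNR.le (Int.fract_nonneg _))
    have h4 : (N:ℝ) * f₂ < (⌊(N:ℝ) * f₁⌋₊ : ℕ) + 1 := by
      rw [heq']; exact Nat.lt_floor_add_one _
    have hNf : |(N:ℝ)*f₁ - N*f₂| < 1 := by rw [abs_lt]; constructor <;> linarith
    have hrw : (N:ℝ)*f₁ - N*f₂ = N*(f₁ - f₂) := by ring
    rw [hrw, abs_mul, abs_of_pos hNR] at hNf
    rw [lt_div_iff₀ hNR]
    linarith
  refine ⟨f₁ - f₂, ?_, hdiff.trans hinvN, k₁ - k₂, by omega, ?_⟩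
  · rw [hf]
    exact (hθ.natCast_mul (m := k₁ - k₂) (by omega)).sub_intCast _
  · exact coe_eq_coe _ (by rw [hf]; ring)


/-- Multiples of a small nonzero step come close to every point. -/
lemma steps_dense {δ : ℝ} (hδ : δ ≠ 0) (z : 𝕋) {ε : ℝ} (h : |δ| < ε) :
    ∃ m : ℕ, dist (((m * δ : ℝ) : 𝕋)) z < ε := by
  obtain ⟨w₀, rfl⟩ := QuotientAddGroup.mk_surjective z
  set w := Int.fract w₀ with hw
  have hw0 : 0 ≤ w := Int.fract_nonneg _
  have hw1 : w < 1 := Int.fract_lt_one _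
  have hcoe : ((w : ℝ) : 𝕋) = (w₀ : 𝕋) := coe_eq_coe (-⌊w₀⌋) (by rw [hw, Int.fract]; push_cast; ring)
  rcases lt_or_gt_of_ne hδ with hneg | hpos
  · -- δ < 0
    refine ⟨⌊(w - 1)/δ⌋₊, ?_⟩
    set m := ⌊(w - 1)/δ⌋₊ with hm
    have hrat : 0 ≤ (w - 1)/δ := by
      rw [div_nonneg_iff]; right; constructor <;> linarith
    have h1 : (m:ℝ) ≤ (w - 1)/δ := Nat.floor_le hrat
    have h2 : (w - 1)/δ < m + 1 := Nat.lt_floor_add_one _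
    have h3 : m * δ ≥ w - 1 := by
      have := mul_le_mul_of_nonpos_right h1 hneg.le
      rwa [div_mul_cancel₀ _ hδ] at this
    have h4 : w - 1 > (m + 1) * δ := by
      have := mul_lt_mul_of_neg_right h2 hneg
      rwa [div_mul_cancel₀ _ hδ] at this
    have key : |m * δ - (w - 1)| < ε := by
      rw [abs_lt]
      constructor
      · have : |δ| = -δ := abs_of_neg hneg
        nlinarith
      · nlinarith [abs_of_neg hneg]
    calc dist (((m : ℕ) * δ : ℝ) : 𝕋) ((w₀:ℝ) : 𝕋)
        = dist (((m : ℕ) * δ : ℝ) : 𝕋) ((w - 1 : ℝ) : 𝕋) := by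
          rw [show ((w - 1 : ℝ) : 𝕋) = ((w₀:ℝ):𝕋) from
            (coe_eq_coe (-1 - ⌊w₀⌋) (by rw [hw, Int.fract]; push_cast; ring))]
      _ ≤ |m * δ - (w - 1)| := dist_coe_le _ _
      _ < ε := key
  · -- δ > 0
    refine ⟨⌊w/δ⌋₊, ?_⟩
    set m := ⌊w/δ⌋₊ with hm
    have h1 : (m:ℝ) ≤ w/δ := Nat.floor_le (div_nonneg hw0 hpos.le)
    have h2 : w/δ < m + 1 := Nat.lt_floor_add_one _
    have h3 : m * δ ≤ w := by
      have := mul_le_mul_of_nonneg_right h1 hpos.le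
      rwa [div_mul_cancel₀ _ hδ] at this
    have h4 : w < (m + 1) * δ := by
      have := mul_lt_mul_of_pos_right h2 hpos
      rwa [div_mul_cancel₀ _ hδ] at this
    have key : |m * δ - w| < ε := by
      rw [abs_lt]
      constructor
      · nlinarith [abs_of_pos hpos]
      · nlinarith [abs_of_pos hpos]
    calc dist (((m : ℕ) * δ : ℝ) : 𝕋) ((w₀:ℝ) : 𝕋)
        = dist (((m : ℕ) * δ : ℝ) : 𝕋) ((w : ℝ) : 𝕋) := by rw [hcoe]
      _ ≤ |m * δ - w| := dist_coe_le _ _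
      _ < ε := key

/-- The natural orbit of an irrational rotation is dense in the circle. -/
lemma dense_nsmul (θ : ℝ) (hθ : Irrational θ) :
    Dense (range fun n : ℕ => ((n * θ : ℝ) : 𝕋)) := by
  rw [Metric.dense_iff]
  intro z ε hε
  obtain ⟨δ, hδirr, hδε, n, hn, hcoe⟩ := exists_small θ hθ hε
  have hδ0 : δ ≠ 0 := by
    intro h; exact hδirr (h ▸ ⟨0, by norm_num⟩)
  obtain ⟨m, hm⟩ := steps_dense hδ0 z hδε
  refine ⟨((m * n : ℕ) * θ : ℝ), ?_, ⟨m * n, rfl⟩⟩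
  rw [Metric.mem_ball]
  have hco : (((m * n : ℕ) * θ : ℝ) : 𝕋) = ((m * δ : ℝ) : 𝕋) := by
    have h1 : (((m * n : ℕ) * θ : ℝ) : 𝕋) = m • (((n:ℕ) * θ : ℝ) : 𝕋) := by
      rw [← AddCircle.coe_nsmul]
      congr 1
      push_cast
      ring
    rw [h1, hcoe, ← AddCircle.coe_nsmul, nsmul_eq_mul]
  rw [hco]
  exact hm

/-- A nonempty closed set invariant under adding an irrational is everything. -/
lemma closed_invariant_eq_univ {θ : ℝ} (hθ : Irrational θ) {F : Set 𝕋}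
    (hF : IsClosed F) (hne : F.Nonempty) (hinv : ∀ x ∈ F, x + ((θ : ℝ) : 𝕋) ∈ F) :
    F = univ := by
  obtain ⟨x₀, hx₀⟩ := hne
  have horb : ∀ n : ℕ, x₀ + ((n * θ : ℝ) : 𝕋) ∈ F := by
    intro n
    induction n with
    | zero => simpa using hx₀
    | succ n ih =>
      have h2 := hinv _ ih
      have h3 : (((n+1 : ℕ) * θ : ℝ) : 𝕋) = ((n * θ : ℝ) : 𝕋) + ((θ:ℝ) : 𝕋) := by
        have : ((n+1 : ℕ) * θ : ℝ) = (n * θ) + θ := by push_cast; ring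
        rw [this]; rfl
      rw [h3, ← add_assoc]
      exact h2
  have hsub : range (fun n : ℕ => x₀ + ((n * θ : ℝ) : 𝕋)) ⊆ F := by
    rintro _ ⟨n, rfl⟩; exact horb n
  have hde : Dense (range (fun n : ℕ => x₀ + ((n * θ : ℝ) : 𝕋))) := by
    have h1 : range (fun n : ℕ => x₀ + ((n * θ : ℝ) : 𝕋))
        = (Homeomorph.addLeft x₀) '' (range fun n : ℕ => ((n * θ : ℝ) : 𝕋)) := by
      rw [← range_comp]; rfl
    rw [h1, dense_iff_closure_eq, ← (Homeomorph.addLeft x₀).image_closure,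
      dense_iff_closure_eq.1 (dense_nsmul θ hθ), image_univ,
      (Homeomorph.addLeft x₀).surjective.range_eq]
  apply eq_univ_of_univ_subset
  rw [← dense_iff_closure_eq.1 hde]
  exact closure_minimal hsub hF

lemma torus_dense (r : ℝ) (hr : Irrational r) :
    Dense (range fun n : ℕ =>
      (((2*r*(n:ℝ) : ℝ) : 𝕋), ((r*(n:ℝ)^2 : ℝ) : 𝕋))) := by
  have h2r : Irrational (2*r) := by
    have := hr.natCast_mul (m := 2) (by norm_num)
    simpa using this
  set a : 𝕋 := ((2*r : ℝ) : 𝕋) with ha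
  set c : 𝕋 := ((r : ℝ) : 𝕋) with hc
  set T : 𝕋 × 𝕋 → 𝕋 × 𝕋 := fun p => (p.1 + a, p.2 + p.1 + c) with hT
  have hTcont : Continuous T := by rw [hT]; fun_prop
  set pt : ℕ → 𝕋 × 𝕋 := fun n => (((2*r*(n:ℝ) : ℝ) : 𝕋), ((r*(n:ℝ)^2 : ℝ) : 𝕋)) with hpt
  have hTpt : ∀ n : ℕ, T (pt n) = pt (n+1) := by
    intro n
    refine Prod.ext ?_ ?_
    · show ((2*r*(n:ℝ) : ℝ) : 𝕋) + ((2*r : ℝ) : 𝕋) = ((2*r*((n:ℕ)+1:ℕ) : ℝ) : 𝕋)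
      show ((2*r*(n:ℝ) + 2*r : ℝ) : 𝕋) = _
      exact congrArg (fun x : ℝ => ((x:ℝ):𝕋)) (by push_cast; ring)
    · show ((r*(n:ℝ)^2 : ℝ) : 𝕋) + ((2*r*(n:ℝ) : ℝ) : 𝕋) + ((r : ℝ) : 𝕋)
          = ((r*(((n:ℕ)+1:ℕ):ℝ)^2 : ℝ) : 𝕋)
      show ((r*(n:ℝ)^2 + 2*r*(n:ℝ) + r : ℝ) : 𝕋) = _
      exact congrArg (fun x : ℝ => ((x:ℝ):𝕋)) (by push_cast; ring)
  set O : Set (𝕋 × 𝕋) := range pt with hO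
  have hOmaps : MapsTo T O O := by
    rintro _ ⟨n, rfl⟩; exact ⟨n+1, (hTpt n).symm⟩
  set S : Set (Set (𝕋 × 𝕋)) :=
    {A | A.Nonempty ∧ IsClosed A ∧ MapsTo T A A} with hS
  have hM₀ : closure O ∈ S := by
    refine ⟨⟨pt 0, subset_closure ⟨0, rfl⟩⟩, isClosed_closure, ?_⟩
    intro p hp
    have h1 : T p ∈ T '' closure O := ⟨p, hp, rfl⟩
    have h2 : T '' closure O ⊆ closure (T '' O) := image_closure_subset_closure_image hTcont
    exact closure_mono (mapsTo_iff_image_subset.1 hOmaps) (h2 h1)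
  have hchainlem : ∀ c ⊆ S, IsChain (· ⊆ ·) c → c.Nonempty →
      ∃ lb ∈ S, ∀ s ∈ c, lb ⊆ s := by
    intro ch hchS hchain hchne
    haveI : Nonempty ch := hchne.to_subtype
    refine ⟨⋂₀ ch, ⟨?_, ?_, ?_⟩, fun s hs => sInter_subset_of_mem hs⟩
    · apply IsCompact.nonempty_sInter_of_directed_nonempty_isCompact_isClosed
      · intro x hx y hy
        rcases eq_or_ne x y with rfl | hne
        · exact ⟨x, hx, Subset.rfl, Subset.rfl⟩
        · rcases hchain hx hy hne with h | h
          · exact ⟨x, hx, Subset.rfl, h⟩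
          · exact ⟨y, hy, h, Subset.rfl⟩
      · exact fun U hU => (hchS hU).1
      · exact fun U hU => (hchS hU).2.1.isCompact
      · exact fun U hU => (hchS hU).2.1
    · exact isClosed_sInter fun U hU => (hchS hU).2.1
    · intro p hp
      rw [mem_sInter] at hp ⊢
      intro U hU
      exact (hchS hU).2.2 (hp U hU)
  obtain ⟨M, hMM₀, hMmin⟩ := zorn_superset_nonempty S hchainlem (closure O) hM₀
  obtain ⟨hMne, hMcl, hMinv⟩ := hMmin.1
  have hMcpt : IsCompact M := hMcl.isCompact
  have min' : ∀ A, A ⊆ M → A.Nonempty → IsClosed A → MapsTo T A A → A = M :=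
    fun A hsub h1 h2 h3 => le_antisymm hsub (hMmin.2 ⟨h1, h2, h3⟩ hsub)
  -- full projection
  have hfull : ∀ x : 𝕋, ∃ y, (x, y) ∈ M := by
    have hF : Prod.fst '' M = univ := by
      apply closed_invariant_eq_univ h2r
      · exact (hMcpt.image continuous_fst).isClosed
      · exact hMne.image _
      · rintro _ ⟨p, hp, rfl⟩
        exact ⟨T p, hMinv hp, rfl⟩
    intro x
    have hx : x ∈ Prod.fst '' M := by rw [hF]; trivial
    obtain ⟨p, hp, rfl⟩ := hx
    exact ⟨p.2, by rwa [Prod.mk.eta]⟩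
  -- the vertical stabilizer
  set H : Set 𝕋 := {t | ∀ p ∈ M, (p.1, p.2 + t) ∈ M} with hH
  have hH0 : (0:𝕋) ∈ H := fun p hp => by simpa using hp
  have hSt : ∀ t ∈ H, (fun p : 𝕋 × 𝕋 => (p.1, p.2 + t)) '' M = M := by
    intro t ht
    apply min'
    · rintro _ ⟨p, hp, rfl⟩; exact ht p hp
    · exact hMne.image _
    · exact (hMcpt.image (by fun_prop)).isClosed
    · rintro _ ⟨p, hp, rfl⟩
      refine ⟨T p, hMinv hp, Prod.ext rfl ?_⟩
      show (T p).2 + t = ((p.2 + t) + p.1 + c)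
      show (p.2 + p.1 + c) + t = (p.2 + t) + p.1 + c
      abel
  have himg_neg : ∀ t : 𝕋, M ⊆ (fun p : 𝕋 × 𝕋 => (p.1, p.2 + t)) '' M → -t ∈ H := by
    intro t hMsub p hp
    obtain ⟨q, hq, hqe⟩ := hMsub hp
    have hqe' : (q.1, q.2 + t) = p := hqe
    have h1 : q.1 = p.1 := (Prod.ext_iff.1 hqe').1
    have h2 : q.2 + t = p.2 := (Prod.ext_iff.1 hqe').2
    have h3 : (p.1, p.2 + -t) = q := Prod.ext h1.symm (by rw [← h2, add_neg_cancel_right])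
    rw [h3]; exact hq
  have hHneg : ∀ t ∈ H, -t ∈ H := fun t ht => himg_neg t (hSt t ht).symm.subset
  have hHadd : ∀ t ∈ H, ∀ s ∈ H, t + s ∈ H := by
    intro t ht s hs p hp
    have h1 := ht p hp
    have h2 := hs _ h1
    simpa [add_assoc] using h2
  have hfib : ∀ p ∈ M, ∀ q ∈ M, p.1 = q.1 → q.2 - p.2 ∈ H := by
    intro p hp q hq hpq
    set t := q.2 - p.2 with htdef
    have hqim : q ∈ (fun u : 𝕋 × 𝕋 => (u.1, u.2 + t)) '' M ∩ M := by
      refine ⟨⟨p, hp, Prod.ext hpq ?_⟩, hq⟩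
      show p.2 + (q.2 - p.2) = q.2
      abel
    have hC : (fun u : 𝕋 × 𝕋 => (u.1, u.2 + t)) '' M ∩ M = M := by
      apply min' _ inter_subset_right ⟨q, hqim⟩
      · exact ((hMcpt.image (by fun_prop)).isClosed.inter hMcl)
      · rintro u ⟨⟨v, hv, rfl⟩, hu2⟩
        refine ⟨⟨T v, hMinv hv, Prod.ext rfl ?_⟩, hMinv hu2⟩
        show (v.2 + v.1 + c) + t = (v.2 + t) + v.1 + c
        abel
    have hneg : -t ∈ H := himg_neg t (fun x hx => by rw [← hC] at hx; exact hx.1)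
    have := hHneg _ hneg
    rwa [neg_neg] at this
  have hHcl : IsClosed H := by
    have : H = ⋂ p ∈ M, ((fun t : 𝕋 => (p.1, p.2 + t)) ⁻¹' M) := by
      ext t; simp [hH]
    rw [this]
    exact isClosed_biInter fun p hp => hMcl.preimage (by fun_prop)
  -- subgroup structure
  set Hgrp : AddSubgroup 𝕋 :=
    { carrier := H
      zero_mem' := hH0
      add_mem' := fun ht hs => hHadd _ ht _ hs
      neg_mem' := fun ht => hHneg _ ht } with hHgrp
  set H' : AddSubgroup ℝ :=
    Hgrp.comap (QuotientAddGroup.mk' (AddSubgroup.zmultiples (1:ℝ))) with hH'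
  have hMuniv : M = univ := by
    have hHuniv : H = univ := by
      rcases AddSubgroup.dense_or_cyclic H' with hdense | ⟨g, hg⟩
      · -- H is dense hence everything
        have hDH : Dense H := by
          rw [dense_iff_inter_open]
          intro U hUo hUne
          obtain ⟨u, hu⟩ := hUne
          obtain ⟨v, rfl⟩ := QuotientAddGroup.mk_surjective u
          have hVo : IsOpen ((fun x : ℝ => ((x : ℝ) : 𝕋)) ⁻¹' U) :=
            hUo.preimage continuous_quotient_mk'
          obtain ⟨s, hsV, hsH'⟩ := hdense.inter_open_nonempty _ hVo ⟨v, hu⟩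
          exact ⟨((s:ℝ):𝕋), hsV, hsH'⟩
        rw [← hHcl.closure_eq, ← dense_iff_closure_eq.1 hDH]
      · -- cyclic case: derive a contradiction
        exfalso
        have h1H' : (1:ℝ) ∈ H' := by
          show ((1:ℝ):𝕋) ∈ Hgrp
          have he : ((1:ℝ):𝕋) = 0 := by simpa using coe_int_eq_zero 1
          rw [he]; exact hH0
        rw [hg, ← AddSubgroup.zmultiples_eq_closure] at h1H'
        obtain ⟨m, hm⟩ := h1H'
        have hmg : (m:ℝ) * g = 1 := by
          have : (m : ℤ) • g = 1 := hm
          rwa [zsmul_eq_mul] at this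
        have hm0 : m ≠ 0 := by rintro rfl; simp at hmg
        set k : ℕ := m.natAbs with hk
        have hkpos : 0 < k := Int.natAbs_pos.2 hm0
        have hexp : ∀ t ∈ H, (k:ℕ) • t = 0 := by
          intro t ht
          obtain ⟨s, rfl⟩ := QuotientAddGroup.mk_surjective t
          have hsH' : s ∈ H' := ht
          rw [hg, ← AddSubgroup.zmultiples_eq_closure] at hsH'
          obtain ⟨j, hj⟩ := hsH'
          have hj' : (j : ℤ) • g = s := hj
          have hjg : (j:ℝ) * g = s := by rwa [zsmul_eq_mul] at hj'
          have hz : ∃ z : ℤ, (k:ℝ) * s = z := by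
            rcases le_or_gt 0 m with hsign | hsign
            · refine ⟨j, ?_⟩
              have hkm : ((k:ℕ):ℝ) = (m:ℝ) := by
                rw [hk, Nat.cast_natAbs]
                exact_mod_cast congrArg (fun z : ℤ => (z:ℝ)) (abs_of_nonneg hsign)
              rw [hkm]
              linear_combination (-(m:ℝ)) * hjg + (j:ℝ) * hmg
            · refine ⟨-j, ?_⟩
              have hkm : ((k:ℕ):ℝ) = -(m:ℝ) := by
                rw [hk, Nat.cast_natAbs]
                exact_mod_cast congrArg (fun z : ℤ => (z:ℝ)) (abs_of_nonpos hsign.le)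
              rw [hkm]
              push_cast
              linear_combination (m:ℝ) * hjg + (-(j:ℝ)) * hmg
          obtain ⟨z, hz⟩ := hz
          have hcoe : (k:ℕ) • ((s:ℝ):𝕋) = (((k:ℝ) * s : ℝ):𝕋) := (coe_nat_mul k s).symm
          rw [hcoe, hz]
          exact coe_int_eq_zero z
        -- build the continuous section ψ
        choose Y hY using hfull
        set ψ : 𝕋 → 𝕋 := fun x => k • Y x with hψdef
        have hwd : ∀ p ∈ M, k • p.2 = ψ p.1 := by
          intro p hp
          have ht : p.2 - Y p.1 ∈ H := hfib (p.1, Y p.1) (hY p.1) p hp rfl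
          have h0 := hexp _ ht
          rw [smul_sub] at h0
          have h1 := sub_eq_zero.1 h0
          simpa [hψdef] using h1
        set Γ : Set (𝕋 × 𝕋) := (fun p : 𝕋 × 𝕋 => (p.1, k • p.2)) '' M with hΓdef
        have hΓcpt : IsCompact Γ := hMcpt.image (by fun_prop)
        have hΓmem : ∀ x z, (x, z) ∈ Γ ↔ z = ψ x := by
          intro x z
          constructor
          · rintro ⟨p, hp, hpe⟩
            have hpe' : (p.1, k • p.2) = (x, z) := hpe
            have h1 : p.1 = x := (Prod.ext_iff.1 hpe').1
            have h2 : k • p.2 = z := (Prod.ext_iff.1 hpe').2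
            rw [← h2, hwd p hp, h1]
          · rintro rfl
            exact ⟨(x, Y x), hY x, rfl⟩
        have hψc : Continuous ψ := by
          rw [continuous_iff_isClosed]
          intro C hC
          have himg : ψ ⁻¹' C = Prod.fst '' (Γ ∩ univ ×ˢ C) := by
            ext x
            constructor
            · intro hx
              exact ⟨(x, ψ x), ⟨(hΓmem x _).2 rfl, trivial, hx⟩, rfl⟩
            · rintro ⟨p, ⟨hpΓ, -, hpC⟩, rfl⟩
              have hp2 : p.2 = ψ p.1 := (hΓmem p.1 p.2).1 (by rwa [Prod.mk.eta])
              rw [mem_preimage, ← hp2]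
              exact hpC
          rw [himg]
          exact ((hΓcpt.inter_right ((isClosed_univ.prod hC))).image continuous_fst).isClosed
        have hfe : ∀ x : 𝕋, ψ (x + a) = ψ x + k • x + k • c := by
          intro x
          have hp := hMinv (hY x)
          have h1 := hwd _ hp
          have h2 : (T (x, Y x)).2 = Y x + x + c := rfl
          have h3 : (T (x, Y x)).1 = x + a := rfl
          rw [h2, h3] at h1
          rw [← h1, smul_add, smul_add]
        have hit : ∀ n : ℕ, ∃ d : 𝕋, ∀ x, ψ (x + n • a) = ψ x + (n * k) • x + d := by
          intro n
          induction n with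
          | zero => exact ⟨0, fun x => by simp⟩
          | succ n ih =>
            obtain ⟨d, hd⟩ := ih
            refine ⟨k • c + (n * k) • a + d, fun x => ?_⟩
            have h1 : x + (n + 1) • a = (x + a) + n • a := by
              rw [succ_nsmul']
              abel
            rw [h1, hd (x + a), hfe x]
            have h2 : (n * k) • (x + a) = (n * k) • x + (n * k) • a := smul_add _ _ _
            rw [h2]
            have h3 : ((n + 1) * k) • x = k • x + (n * k) • x := by
              rw [← add_nsmul]
              congr 1
              ring
            rw [h3]
            abel
        -- tube lemma and contradiction
        have hhalf : (((1:ℝ)/2 : ℝ) : 𝕋) ≠ 0 := by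
          rw [Ne, AddCircle.coe_eq_zero_iff]
          rintro ⟨z, hz⟩
          have hz' : (z:ℝ) = 1/2 := by simpa using hz
          have h2z : (2 * z : ℤ) = 1 := by exact_mod_cast (by linarith : (2*(z:ℝ)) = 1)
          omega
        set half : 𝕋 := (((1:ℝ)/2 : ℝ) : 𝕋) with hhalfdef
        set Φ : 𝕋 × 𝕋 → 𝕋 := fun q => ψ (q.2 + q.1) - ψ q.2 with hΦ
        have hΦc : Continuous Φ := by
          apply Continuous.sub
          · exact hψc.comp (continuous_snd.add continuous_fst)
          · exact hψc.comp continuous_snd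
        have hUopen : IsOpen (Φ ⁻¹' {z : 𝕋 | z ≠ half}) := (isOpen_ne).preimage hΦc
        have hsub : ({0} : Set 𝕋) ×ˢ (univ : Set 𝕋) ⊆ Φ ⁻¹' {z : 𝕋 | z ≠ half} := by
          rintro ⟨s, x⟩ ⟨hs, -⟩
          have hs0 : s = 0 := hs
          rw [mem_preimage]
          show Φ (s, x) ≠ half
          rw [hΦ]
          show ψ (x + s) - ψ x ≠ half
          rw [hs0, add_zero, sub_self]
          exact fun h => hhalf h.symm
        obtain ⟨u, v, hu, hv, h0u, hunivv, huv⟩ :=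
          generalized_tube_lemma isCompact_singleton isCompact_univ hUopen hsub
        have h0u' : (0:𝕋) ∈ u := h0u rfl
        have hW : IsOpen ((fun t : 𝕋 => t + a) ⁻¹' u) := hu.preimage (by fun_prop)
        have hWne : ((fun t : 𝕋 => t + a) ⁻¹' u).Nonempty := ⟨-a, by simpa using h0u'⟩
        obtain ⟨w, hwW, hwrange⟩ :=
          (dense_nsmul (2*r) h2r).inter_open_nonempty _ hW hWne
        obtain ⟨n, rfl⟩ := hwrange
        have hmem : ((n:ℕ)+1) • a ∈ u := by
          have he : ((n:ℕ)+1) • a = (((n:ℕ) * (2*r) : ℝ) : 𝕋) + a := by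
            rw [← coe_nat_mul]
            have : (((n:ℕ)+1 : ℕ) * (2*r) : ℝ) = ((n:ℕ) * (2*r) + 2*r : ℝ) := by
              push_cast; ring
            rw [this]
            rfl
          rw [he]
          exact hwW
        obtain ⟨d, hd⟩ := hit (n+1)
        obtain ⟨dr, hdr⟩ := QuotientAddGroup.mk_surjective d
        set m' : ℕ := (n+1) * k with hm'
        have hm'pos : 0 < m' := Nat.mul_pos (Nat.succ_pos n) hkpos
        set x₀ : 𝕋 := (((1/2 - dr)/(m' : ℝ) : ℝ) : 𝕋) with hx₀def
        have hx₀ : (m' : ℕ) • x₀ + d = half := by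
          rw [hx₀def, ← coe_nat_mul, ← hdr]
          have hne : ((m' : ℕ) : ℝ) ≠ 0 := by
            exact_mod_cast hm'pos.ne'
          have h5 : ((m':ℕ) : ℝ) * ((1/2 - dr)/((m':ℕ):ℝ)) = 1/2 - dr := by
            field_simp
          rw [h5]
          show (((1/2 - dr) + dr : ℝ) : 𝕋) = half
          norm_num
          rfl
        have hcontr := huv (mk_mem_prod hmem (hunivv (mem_univ x₀)))
        rw [mem_preimage] at hcontr
        apply hcontr
        show ψ (x₀ + ((n:ℕ)+1) • a) - ψ x₀ = half
        rw [hd x₀, ← hx₀, hm']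
        abel
    -- conclude M = univ from H = univ
    apply eq_univ_of_forall
    intro p
    obtain ⟨y₀, hy₀⟩ := hfull p.1
    have ht : p.2 - y₀ ∈ H := hHuniv ▸ mem_univ _
    have := ht (p.1, y₀) hy₀
    simpa using this
  -- conclude
  have : closure O = univ := eq_univ_of_univ_subset (hMuniv ▸ hMM₀)
  rw [hO] at this
  exact dense_iff_closure_eq.2 this

lemma coe_fract (y : ℝ) : ((Int.fract y : ℝ) : 𝕋) = (y : 𝕋) :=
  coe_eq_coe (-⌊y⌋) (by rw [Int.fract]; push_cast; ring)

lemma close_real {f t : ℝ} {ε : ℝ} (hf0 : 0 ≤ f) (hf1 : f < 1) (ht0 : 0 < t) (ht1 : t < 1)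
    (h1 : dist ((f : ℝ) : 𝕋) ((t : ℝ) : 𝕋) < t)
    (h2 : dist ((f : ℝ) : 𝕋) ((t : ℝ) : 𝕋) < 1 - t)
    (h3 : dist ((f : ℝ) : 𝕋) ((t : ℝ) : 𝕋) < ε) : |f - t| < ε := by
  have hd : dist ((f : ℝ) : 𝕋) ((t : ℝ) : 𝕋) = |(f - t) - round (f - t)| := by
    rw [dist_eq_norm]
    have : ((f : ℝ) : 𝕋) - ((t : ℝ) : 𝕋) = ((f - t : ℝ) : 𝕋) := rfl
    rw [this]
    simpa using AddCircle.norm_eq (p := (1:ℝ)) (x := f - t)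
  rw [hd] at h1 h2 h3
  set ρ := round (f - t) with hρ
  have hb1 : (ρ:ℝ) < 2 := by
    obtain ⟨l, u⟩ := abs_lt.1 (h2.trans_le (by linarith : 1 - t ≤ 1))
    linarith
  have hb2 : (-2:ℝ) < ρ := by
    obtain ⟨l, u⟩ := abs_lt.1 (h1.trans_le (by linarith : t ≤ 1))
    linarith
  have hρcases : ρ = -1 ∨ ρ = 0 ∨ ρ = 1 := by
    have c1 : ρ < 2 := by exact_mod_cast hb1
    have c2 : -2 < ρ := by exact_mod_cast hb2
    omega
  rcases hρcases with hc | hc | hc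
  · exfalso
    rw [hc] at h2
    push_cast at h2
    rw [abs_lt] at h2
    linarith
  · rw [hc] at h3
    simpa using h3
  · exfalso
    rw [hc] at h1
    push_cast at h1
    rw [abs_lt] at h1
    linarith

lemma fract_dense (r : ℝ) (hr : Irrational r) :
    Set.Icc (0:ℝ) 1 ×ˢ Set.Icc (0:ℝ) 1 ⊆
      closure {x : ℝ × ℝ | ∃ n : ℕ, x = (Int.fract (2 * r * n), Int.fract (r * n ^ 2))} := by
  set Sf : Set (ℝ × ℝ) :=
    {x : ℝ × ℝ | ∃ n : ℕ, x = (Int.fract (2 * r * n), Int.fract (r * n ^ 2))} with hSf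
  have hIoo : Ioo (0:ℝ) 1 ×ˢ Ioo (0:ℝ) 1 ⊆ closure Sf := by
    rintro ⟨x, y⟩ ⟨hx, hy⟩
    rw [Metric.mem_closure_iff]
    intro ε hε
    set ε' := min (min (min x (1-x)) (min y (1-y))) ε with hε'def
    have hε' : 0 < ε' := by
      refine lt_min (lt_min (lt_min hx.1 (by linarith [hx.2])) (lt_min hy.1 (by linarith [hy.2]))) hε
    have hd := torus_dense r hr
    rw [Metric.dense_iff] at hd
    obtain ⟨w, hwball, hwrange⟩ := hd (((x:ℝ):𝕋), ((y:ℝ):𝕋)) ε' hε'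
    obtain ⟨n, rfl⟩ := hwrange
    rw [Metric.mem_ball, Prod.dist_eq, max_lt_iff] at hwball
    obtain ⟨hw1, hw2⟩ := hwball
    have hq1 : dist ((Int.fract (2*r*(n:ℝ)) : ℝ) : 𝕋) ((x:ℝ):𝕋) < ε' := by
      rw [coe_fract]; exact hw1
    have hq2 : dist ((Int.fract (r*(n:ℝ)^2) : ℝ) : 𝕋) ((y:ℝ):𝕋) < ε' := by
      rw [coe_fract]; exact hw2
    refine ⟨(Int.fract (2*r*(n:ℝ)), Int.fract (r*(n:ℝ)^2)), ⟨n, rfl⟩, ?_⟩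
    rw [Prod.dist_eq, max_lt_iff]
    have hm1 : ε' ≤ min x (1-x) := le_trans (min_le_left _ _) (le_trans (min_le_left _ _) le_rfl)
    have hm2 : ε' ≤ min y (1-y) := le_trans (min_le_left _ _) (min_le_right _ _)
    have hm3 : ε' ≤ ε := min_le_right _ _
    constructor
    · rw [Real.dist_eq, abs_sub_comm]
      exact close_real (Int.fract_nonneg _) (Int.fract_lt_one _) hx.1 hx.2
        (hq1.trans_le (hm1.trans (min_le_left _ _)))
        (hq1.trans_le (hm1.trans (min_le_right _ _)))
        (hq1.trans_le hm3)
    · rw [Real.dist_eq, abs_sub_comm]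
      exact close_real (Int.fract_nonneg _) (Int.fract_lt_one _) hy.1 hy.2
        (hq2.trans_le (hm2.trans (min_le_left _ _)))
        (hq2.trans_le (hm2.trans (min_le_right _ _)))
        (hq2.trans_le hm3)
  have hIcc : Set.Icc (0:ℝ) 1 ×ˢ Set.Icc (0:ℝ) 1
      = closure (Ioo (0:ℝ) 1 ×ˢ Ioo (0:ℝ) 1) := by
    rw [closure_prod_eq, closure_Ioo (by norm_num : (0:ℝ) ≠ 1)]
  rw [hIcc]
  calc closure (Ioo (0:ℝ) 1 ×ˢ Ioo (0:ℝ) 1) ⊆ closure (closure Sf) := closure_mono hIoo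
    _ = closure Sf := closure_closure

end Stmt2Aux

theorem stmt2 (r : ℝ) (hr : Irrational r) :
    (Dense {z : UnitAddCircle × UnitAddCircle |
      ∃ n : ℕ, z = (((2 * r * n : ℝ) : UnitAddCircle), ((r * n ^ 2 : ℝ) : UnitAddCircle))}) ∧
    (Set.Icc (0:ℝ) 1 ×ˢ Set.Icc (0:ℝ) 1 ⊆
      closure {x : ℝ × ℝ | ∃ n : ℕ, x = (Int.fract (2 * r * n), Int.fract (r * n ^ 2))}) := by
  constructor
  · have h := Stmt2Aux.torus_dense r hr
    have heq : {z : UnitAddCircle × UnitAddCircle |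
        ∃ n : ℕ, z = (((2 * r * n : ℝ) : UnitAddCircle), ((r * n ^ 2 : ℝ) : UnitAddCircle))}
        = range (fun n : ℕ =>
          (((2*r*(n:ℝ) : ℝ) : UnitAddCircle), ((r*(n:ℝ)^2 : ℝ) : UnitAddCircle))) := by
      ext z
      simp only [mem_setOf_eq, mem_range]
      constructor
      · rintro ⟨n, rfl⟩; exact ⟨n, rfl⟩
      · rintro ⟨n, rfl⟩; exact ⟨n, rfl⟩
    rw [heq]
    exact h
  · exact Stmt2Aux.fract_dense r hr
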